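/- For a suitable pair (A,B), the third Sylvester sum satisfies S_3(A,B) = (S_0^2 − S_0)^2/4 + (S_0(A^2,B^2)/4)·S_0·(S_0−1) + (S_0(A^2,B^2)/48)·(S_0(A^2,B^2)+2) − S_0(A^4,B^4)/240, with S_0 = S_0(A,B). -/

import Mathlib

open Finset

/-- The compound sequence: `g k A B i = b₁⋯bᵢ · aᵢ₊₁⋯a_k` (0-indexed: `A j = a_{j+1}`,
`B j = b_{j+1}`). -/
def compoundSeq (k : ℕ) (A B : ℕ → ℕ) (i : ℕ) : ℕ :=
  (∏ j ∈ Finset.range i, B j) * (∏ j ∈ Finset.Ico i k, A j)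



-- Faulhaber lemmas
lemma faul1 (n : ℕ) : ∑ i ∈ range n, (i:ℚ) = n*(n-1)/2 := by
  induction n with
  | zero => simp
  | succ n ih => rw [sum_range_succ, ih]; push_cast; ring

lemma faul2 (n : ℕ) : ∑ i ∈ range n, (i:ℚ)^2 = n*(n-1)*(2*n-1)/6 := by
  induction n with
  | zero => simp
  | succ n ih => rw [sum_range_succ, ih]; push_cast; ring

lemma faul3 (n : ℕ) : ∑ i ∈ range n, (i:ℚ)^3 = n^2*(n-1)^2/4 := by
  induction n with
  | zero => simp
  | succ n ih => rw [sum_range_succ, ih]; push_cast; ring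

lemma faul4 (n : ℕ) : ∑ i ∈ range n, (i:ℚ)^4 = n*(n-1)*(2*n-1)*(3*n^2-3*n-1)/30 := by
  induction n with
  | zero => simp
  | succ n ih => rw [sum_range_succ, ih]; push_cast; ring

lemma sum_cube (Qq : ℚ) (hq : Qq ≠ 0) (f : ℕ) (r : ℚ) :
    ∑ i ∈ range f, (r + i*Qq)^3 =
      ((r + f*Qq)^4 - r^4)/(4*Qq) - ((r + f*Qq)^3 - r^3)/2 + Qq*((r + f*Qq)^2 - r^2)/4 := by
  induction f with
  | zero => simp
  | succ f ih => rw [sum_range_succ, ih]; push_cast; field_simp; ring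

lemma sum_Icc_reflect (f : ℕ) (φ : ℕ → ℚ) :
    ∑ z ∈ Icc 1 f, φ z = ∑ i ∈ range f, φ (f - i) := by
  apply Finset.sum_nbij' (i := fun z => f - z) (j := fun i => f - i)
  · intro z hz; simp only [mem_Icc] at hz; simp [mem_range]; omega
  · intro i hi; simp only [mem_range] at hi; simp [mem_Icc]; omega
  · intro z hz; simp only [mem_Icc] at hz; omega
  · intro i hi; simp only [mem_range] at hi; omega
  · intro z hz; simp only [mem_Icc] at hz; congr 1; omega



lemma compoundSeq_zero (k : ℕ) (A B : ℕ → ℕ) :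
    compoundSeq k A B 0 = ∏ j ∈ range k, A j := by
  unfold compoundSeq; rw [Finset.range_eq_Ico]; simp

lemma compoundSeq_pow (k : ℕ) (A B : ℕ → ℕ) (e i : ℕ) :
    compoundSeq k (fun t => A t ^ e) (fun t => B t ^ e) i = (compoundSeq k A B i)^e := by
  simp [compoundSeq, mul_pow, Finset.prod_pow]

lemma compoundSeq_succ (k : ℕ) (A B : ℕ → ℕ) (i : ℕ) :
    compoundSeq (k+1) A B (i+1) = B 0 * compoundSeq k (fun t => A (t+1)) (fun t => B (t+1)) i := by
  unfold compoundSeq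
  rw [Finset.prod_range_succ' (fun j => B j), Finset.prod_Ico_eq_prod_range,
    Finset.prod_Ico_eq_prod_range]
  have h1 : k + 1 - (i + 1) = k - i := by omega
  rw [h1]
  have h2 : ∀ j, A (i + 1 + j) = A (i + j + 1) := by intro j; congr 1; omega
  rw [Finset.prod_congr rfl (fun j _ => h2 j)]
  ring

def cbox (k : ℕ) (A : ℕ → ℕ) : Finset (Fin k → ℕ) :=
  Fintype.piFinset (fun j => Finset.range (A (j : ℕ)))

lemma mem_cbox {k : ℕ} {A : ℕ → ℕ} {c : Fin k → ℕ} :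
    c ∈ cbox k A ↔ ∀ j : Fin k, c j < A (j : ℕ) := by
  simp [cbox, Fintype.mem_piFinset]

lemma card_cbox (k : ℕ) (A : ℕ → ℕ) : (cbox k A).card = ∏ j ∈ range k, A j := by
  simp only [cbox, Fintype.card_piFinset, Finset.card_range]
  rw [Fin.prod_univ_eq_prod_range]

def wgt (k : ℕ) (A B : ℕ → ℕ) (c : Fin k → ℕ) : ℕ :=
  ∑ j : Fin k, c j * compoundSeq k A B ((j : ℕ)+1)

lemma wgt_succ (k : ℕ) (A B : ℕ → ℕ) (c : Fin (k+1) → ℕ) :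
    wgt (k+1) A B c
      = B 0 * (c 0 * (∏ j ∈ range k, A (j+1))
          + wgt k (fun t => A (t+1)) (fun t => B (t+1)) (Fin.tail c)) := by
  unfold wgt
  rw [Fin.sum_univ_succ]
  simp only [Fin.val_zero, Fin.val_succ, compoundSeq_succ, compoundSeq_zero, Fin.tail,
    mul_add, Finset.mul_sum]
  congr 1
  · ring
  · apply Finset.sum_congr rfl; intro j _; ring

lemma rep_sum (k : ℕ) (A B : ℕ → ℕ) (co : Fin (k+2) → ℕ) :
    ∑ i : Fin (k+2), co i * compoundSeq (k+1) A B (i : ℕ)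
      = co 0 * (A 0 * ∏ j ∈ range k, A (j+1))
        + B 0 * ∑ i : Fin (k+1), co i.succ
            * compoundSeq k (fun t => A (t+1)) (fun t => B (t+1)) (i : ℕ) := by
  rw [Fin.sum_univ_succ]
  simp only [Fin.val_zero, Fin.val_succ, compoundSeq_succ, compoundSeq_zero,
    Finset.prod_range_succ' (fun j => A j), Finset.mul_sum]
  congr 1
  · ring
  · apply Finset.sum_congr rfl; intro j _; ring

lemma compound_key (k : ℕ) (A B : ℕ → ℕ)
    (hA : ∀ i, i < k → 0 < A i) (hB : ∀ i, i < k → 0 < B i)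
    (hsuit : ∀ i j, j ≤ i → i < k → Nat.Coprime (A i) (B j)) :
    (∀ c ∈ cbox k A, ∀ d ∈ cbox k A,
        wgt k A B c % (∏ j ∈ range k, A j) = wgt k A B d % (∏ j ∈ range k, A j) → c = d) ∧
    (∀ n : ℕ, (∃ co : Fin (k+1) → ℕ, n = ∑ i : Fin (k+1), co i * compoundSeq k A B (i : ℕ)) ↔
        ∃ c ∈ cbox k A, ∃ z : ℕ, n = wgt k A B c + z * ∏ j ∈ range k, A j) := by
  induction k generalizing A B with
  | zero =>
    constructor
    · intro c _ d _ _; funext j; exact j.elim0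
    · intro n
      constructor
      · rintro ⟨co, rfl⟩
        refine ⟨fun j => 0, by simp [mem_cbox], co 0, ?_⟩
        simp [wgt, compoundSeq]
      · rintro ⟨c, _, z, rfl⟩
        exact ⟨fun _ => z, by simp [wgt, compoundSeq]⟩
  | succ k ih =>
    set A' : ℕ → ℕ := fun t => A (t+1) with hA'def
    set B' : ℕ → ℕ := fun t => B (t+1) with hB'def
    obtain ⟨ihInj, ihRep⟩ := ih A' B'
      (fun i hi => hA (i+1) (by omega)) (fun i hi => hB (i+1) (by omega))
      (fun i j hij hi => hsuit (i+1) (j+1) (by omega) (by omega))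
    set Q' : ℕ := ∏ j ∈ range k, A' j with hQ'def
    have hQ'pos : 0 < Q' := Finset.prod_pos (fun j hj => hA (j+1) (by
      simp only [mem_range] at hj; omega))
    have hQ : ∏ j ∈ range (k+1), A j = A 0 * Q' := by
      rw [Finset.prod_range_succ' (fun j => A j)]; ring
    have hA0pos : 0 < A 0 := hA 0 (by omega)
    have hcop : Nat.Coprime (B 0) (A 0 * Q') := by
      rw [← hQ]
      exact Nat.Coprime.prod_right (fun i hi =>
        (hsuit i 0 (by omega) (by simp only [mem_range] at hi; omega)).symm)
    have tail_mem : ∀ c : Fin (k+1) → ℕ, c ∈ cbox (k+1) A → Fin.tail c ∈ cbox k A' := by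
      intro c hc
      rw [mem_cbox] at hc ⊢
      intro j
      simpa [Fin.tail, hA'def] using hc j.succ
    have hInj : ∀ c ∈ cbox (k+1) A, ∀ d ∈ cbox (k+1) A,
        wgt (k+1) A B c % (∏ j ∈ range (k+1), A j)
          = wgt (k+1) A B d % (∏ j ∈ range (k+1), A j) → c = d := by
      intro c hc d hd heq
      rw [hQ] at heq
      have hmod : wgt (k+1) A B c ≡ wgt (k+1) A B d [MOD A 0 * Q'] := heq
      rw [wgt_succ, wgt_succ] at hmod
      have hXY : c 0 * Q' + wgt k A' B' (Fin.tail c)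
          ≡ d 0 * Q' + wgt k A' B' (Fin.tail d) [MOD A 0 * Q'] :=
        Nat.ModEq.cancel_left_of_coprime hcop.symm hmod
      have h1 : c 0 * Q' + wgt k A' B' (Fin.tail c)
          ≡ d 0 * Q' + wgt k A' B' (Fin.tail d) [MOD Q'] := hXY.of_mul_left (A 0)
      have h2 : wgt k A' B' (Fin.tail c) ≡ wgt k A' B' (Fin.tail d) [MOD Q'] := by
        have e1 : (c 0 * Q' + wgt k A' B' (Fin.tail c)) % Q'
            = wgt k A' B' (Fin.tail c) % Q' := by
          rw [add_comm, Nat.add_mul_mod_self_right]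
        have e2 : (d 0 * Q' + wgt k A' B' (Fin.tail d)) % Q'
            = wgt k A' B' (Fin.tail d) % Q' := by
          rw [add_comm, Nat.add_mul_mod_self_right]
        unfold Nat.ModEq at h1 ⊢
        rw [← e1, ← e2]; exact h1
      have htail : Fin.tail c = Fin.tail d := ihInj _ (tail_mem c hc) _ (tail_mem d hd) h2
      have h3 : c 0 * Q' ≡ d 0 * Q' [MOD A 0 * Q'] := by
        rw [htail] at hXY
        exact Nat.ModEq.add_right_cancel' _ hXY
      have hc0 : c 0 < A 0 := by have := mem_cbox.1 hc 0; simpa using this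
      have hd0 : d 0 < A 0 := by have := mem_cbox.1 hd 0; simpa using this
      have h4 : c 0 * Q' = d 0 * Q' := by
        have l1 : c 0 * Q' < A 0 * Q' := by
          exact Nat.mul_lt_mul_of_lt_of_le hc0 (le_refl Q') hQ'pos
        have l2 : d 0 * Q' < A 0 * Q' := by
          exact Nat.mul_lt_mul_of_lt_of_le hd0 (le_refl Q') hQ'pos
        unfold Nat.ModEq at h3
        rwa [Nat.mod_eq_of_lt l1, Nat.mod_eq_of_lt l2] at h3
      have h5 : c 0 = d 0 := Nat.eq_of_mul_eq_mul_right hQ'pos h4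
      funext i
      refine Fin.cases ?_ ?_ i
      · exact h5
      · intro j; exact congrFun htail j
    refine ⟨hInj, ?_⟩
    intro n
    constructor
    · rintro ⟨co, rfl⟩
      rw [rep_sum]
      set m := ∑ i : Fin (k+1), co i.succ * compoundSeq k A' B' (i : ℕ) with hm
      obtain ⟨c', hc', z', hz'⟩ := (ihRep m).1 ⟨fun i => co i.succ, rfl⟩
      obtain ⟨x, y, hxlt, hzxy⟩ : ∃ x y, x < A 0 ∧ z' = x + A 0 * y :=
        ⟨z' % A 0, z' / A 0, Nat.mod_lt _ hA0pos, (Nat.mod_add_div _ _).symm⟩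
      refine ⟨Fin.cons x c', ?_, co 0 + y * B 0, ?_⟩
      · rw [mem_cbox]
        intro j
        refine Fin.cases ?_ ?_ j
        · simpa using hxlt
        · intro i
          simpa [Fin.cons_succ] using mem_cbox.1 hc' i
      · rw [wgt_succ, hQ]
        rw [Fin.tail_cons, Fin.cons_zero, ← hQ'def]
        rw [hz', hzxy]
        ring
    · rintro ⟨c, hc, z, rfl⟩
      refine ⟨Fin.cons z c, ?_⟩
      rw [Fin.sum_univ_succ]
      simp only [Fin.cons_zero, Fin.cons_succ, Fin.val_zero, compoundSeq_zero]
      unfold wgt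
      simp only [Fin.val_succ]
      ring

section GapSum

variable (k : ℕ) (A B : ℕ → ℕ)

lemma gap_sum
    (hA : ∀ i, i < k → 0 < A i) (hB : ∀ i, i < k → 0 < B i)
    (hsuit : ∀ i j, j ≤ i → i < k → Nat.Coprime (A i) (B j))
    (NR : Finset ℕ)
    (hNR : ∀ n : ℕ, n ∈ NR ↔
      ¬ ∃ co : Fin (k + 1) → ℕ, n = ∑ i : Fin (k + 1), co i * compoundSeq k A B (i : ℕ))
    (φ : ℕ → ℚ) :
    ∑ n ∈ NR, φ n = ∑ c ∈ cbox k A,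
      ∑ z ∈ Icc 1 (wgt k A B c / (∏ j ∈ range k, A j)),
        φ (wgt k A B c - z * (∏ j ∈ range k, A j)) := by
  obtain ⟨hinj, hrep⟩ := compound_key k A B hA hB hsuit
  set Q : ℕ := ∏ j ∈ range k, A j with hQdef
  have hQpos : 0 < Q := Finset.prod_pos (fun j hj => hA j (mem_range.1 hj))
  have hsurj : ∀ n : ℕ, ∃ c ∈ cbox k A, wgt k A B c % Q = n % Q := by
    intro n
    have hcard : (range Q).card ≤ (cbox k A).card := by
      rw [card_cbox, card_range]
    obtain ⟨c, hc, hceq⟩ := Finset.surj_on_of_inj_on_of_card_le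
      (f := fun c (_ : c ∈ cbox k A) => wgt k A B c % Q)
      (fun c hc => mem_range.2 (Nat.mod_lt _ hQpos))
      (fun c d hc hd h => hinj c hc d hd h) hcard
      (n % Q) (mem_range.2 (Nat.mod_lt _ hQpos))
    exact ⟨c, hc, hceq.symm⟩
  have hgap : ∀ n : ℕ, n ∈ NR ↔
      ∃ c ∈ cbox k A, wgt k A B c % Q = n % Q ∧ n < wgt k A B c := by
    intro n
    rw [hNR n]
    constructor
    · intro hnot
      obtain ⟨c, hc, hmod⟩ := hsurj n
      refine ⟨c, hc, hmod, ?_⟩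
      by_contra hle
      push_neg at hle
      apply hnot
      rw [hrep n]
      have hdvd : Q ∣ n - wgt k A B c := (Nat.modEq_iff_dvd' hle).1 hmod
      obtain ⟨z, hz⟩ := hdvd
      have heq : n = Q * z + wgt k A B c := (Nat.sub_eq_iff_eq_add hle).1 hz
      exact ⟨c, hc, z, by rw [heq]; ring⟩
    · rintro ⟨c, hc, hmod, hlt⟩
      intro hrepn
      rw [hrep n] at hrepn
      obtain ⟨d, hd, z, hz⟩ := hrepn
      have hd2 : wgt k A B d % Q = n % Q := by
        rw [hz]; exact (Nat.add_mul_mod_self_right _ _ _).symm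
      have hcd : c = d := hinj c hc d hd (hmod.trans hd2.symm)
      rw [hcd] at hlt
      have : wgt k A B d ≤ n := by rw [hz]; exact Nat.le_add_right _ _
      omega
  have hNReq : NR = (cbox k A).biUnion
      (fun c => (Icc 1 (wgt k A B c / Q)).image (fun z => wgt k A B c - z * Q)) := by
    ext n
    rw [hgap n]
    simp only [mem_biUnion, mem_image, mem_Icc]
    constructor
    · rintro ⟨c, hc, hmod, hlt⟩
      have hdvd : Q ∣ wgt k A B c - n := (Nat.modEq_iff_dvd' (le_of_lt hlt)).1 hmod.symm
      obtain ⟨u, hu⟩ := hdvd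
      have heq : wgt k A B c = Q * u + n := (Nat.sub_eq_iff_eq_add (le_of_lt hlt)).1 hu
      have hu1 : 1 ≤ u := by
        rcases Nat.eq_zero_or_pos u with h0 | h1
        · rw [h0, Nat.mul_zero, Nat.zero_add] at heq; omega
        · exact h1
      refine ⟨c, hc, u, ⟨hu1, ?_⟩, ?_⟩
      · rw [Nat.le_div_iff_mul_le hQpos, heq, mul_comm]
        exact Nat.le_add_right _ _
      · rw [heq, mul_comm]; omega
    · rintro ⟨c, hc, z, ⟨hz1, hz2⟩, rfl⟩
      have hzQ : z * Q ≤ wgt k A B c := (Nat.le_div_iff_mul_le hQpos).1 hz2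
      have hzQpos : 0 < z * Q := Nat.mul_pos hz1 hQpos
      refine ⟨c, hc, ?_, ?_⟩
      · conv_lhs => rw [← Nat.sub_add_cancel hzQ]
        exact Nat.add_mul_mod_self_right _ _ _
      · omega
  rw [hNReq, Finset.sum_biUnion]
  · apply Finset.sum_congr rfl
    intro c hc
    apply Finset.sum_image
    intro z hz z' hz' hzz
    simp only [Finset.mem_coe, mem_Icc] at hz hz'
    have hzQ : z * Q ≤ wgt k A B c := (Nat.le_div_iff_mul_le hQpos).1 hz.2
    have hzQ' : z' * Q ≤ wgt k A B c := (Nat.le_div_iff_mul_le hQpos).1 hz'.2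
    have : z * Q = z' * Q := by simp only at hzz; omega
    exact Nat.eq_of_mul_eq_mul_right hQpos this
  · intro c hc d hd hcd
    rw [Function.onFun_apply, Finset.disjoint_left]
    intro n hn hn'
    rw [Finset.mem_coe] at hc hd
    simp only [Finset.mem_image, mem_Icc] at hn hn'
    obtain ⟨z, ⟨hz1, hz2⟩, hzn⟩ := hn
    obtain ⟨z', ⟨hz1', hz2'⟩, hzn'⟩ := hn'
    have hzQ : z * Q ≤ wgt k A B c := (Nat.le_div_iff_mul_le hQpos).1 hz2
    have hzQ' : z' * Q ≤ wgt k A B d := (Nat.le_div_iff_mul_le hQpos).1 hz2'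
    apply hcd
    apply hinj c hc d hd
    have e1 : wgt k A B c % Q = n % Q := by
      rw [← hzn]
      conv_lhs => rw [← Nat.sub_add_cancel hzQ]
      exact Nat.add_mul_mod_self_right _ _ _
    have e2 : wgt k A B d % Q = n % Q := by
      rw [← hzn']
      conv_lhs => rw [← Nat.sub_add_cancel hzQ']
      exact Nat.add_mul_mod_self_right _ _ _
    rw [e1, e2]

end GapSum

section Moments

-- sum over an extra cons coordinate (from earlier t2 work)
lemma cbox_split {M : Type*} [AddCommMonoid M] (k : ℕ) (a : ℕ → ℕ)
    (F : (Fin (k+1) → ℕ) → M) :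
    ∑ c ∈ cbox (k+1) a, F c
      = ∑ x ∈ range (a 0), ∑ c ∈ cbox k (fun t => a (t+1)), F (Fin.cons x c) := by
  rw [← Finset.sum_product']
  apply Finset.sum_nbij' (i := fun c => ((c 0 : ℕ), Fin.tail c))
    (j := fun p => Fin.cons p.1 p.2)
  · intro c hc
    rw [cbox, Fin.mem_piFinset_iff_zero_tail] at hc
    simp only [Finset.mem_product]
    refine ⟨hc.1, ?_⟩
    rw [cbox, Fintype.mem_piFinset]
    intro j
    have := (Fintype.mem_piFinset).1 hc.2 j
    simpa [Fin.tail] using this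
  · intro p hp
    simp only [Finset.mem_product] at hp
    rw [cbox, Fin.mem_piFinset_iff_zero_tail]
    refine ⟨by simpa using hp.1, ?_⟩
    rw [Fin.tail_cons]
    have h2 := hp.2
    rw [cbox, Fintype.mem_piFinset] at h2
    rw [Fintype.mem_piFinset]
    intro j
    simpa [Fin.tail] using h2 j
  · intro c hc; exact Fin.cons_self_tail c
  · intro p hp; simp
  · intro c hc; rw [Fin.cons_self_tail]

def Wq (k : ℕ) (G : ℕ → ℚ) (c : Fin k → ℕ) : ℚ := ∑ j : Fin k, (c j : ℚ) * G (j : ℕ)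

def Epow (k : ℕ) (a : ℕ → ℕ) (G : ℕ → ℚ) (e : ℕ) : ℚ :=
  ∑ j ∈ range k, ((a j : ℚ)^e - 1) * (G j)^e

def Qv (k : ℕ) (a : ℕ → ℕ) : ℚ := ∏ j ∈ range k, (a j : ℚ)

lemma Wq_cons (k : ℕ) (G : ℕ → ℚ) (x : ℕ) (c : Fin k → ℕ) :
    Wq (k+1) G (Fin.cons x c) = (x : ℚ) * G 0 + Wq k (fun t => G (t+1)) c := by
  unfold Wq
  rw [Fin.sum_univ_succ]
  simp [Fin.cons_succ, Fin.val_succ]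

lemma Epow_succ (k : ℕ) (a : ℕ → ℕ) (G : ℕ → ℚ) (e : ℕ) :
    Epow (k+1) a G e
      = ((a 0 : ℚ)^e - 1) * (G 0)^e
        + Epow k (fun t => a (t+1)) (fun t => G (t+1)) e := by
  unfold Epow
  rw [Finset.sum_range_succ']
  ring

lemma Qv_succ (k : ℕ) (a : ℕ → ℕ) :
    Qv (k+1) a = (a 0 : ℚ) * Qv k (fun t => a (t+1)) := by
  unfold Qv
  rw [Finset.prod_range_succ']
  ring

lemma sum_add_pow1 {ι : Type*} (s : Finset ι) (f : ι → ℚ) (t : ℚ) :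
    ∑ i ∈ s, (t + f i) = t * (∑ i ∈ s, (1:ℚ)) + ∑ i ∈ s, f i := by
  rw [Finset.mul_sum, ← Finset.sum_add_distrib]
  apply Finset.sum_congr rfl; intro i _; ring

lemma sum_add_pow2 {ι : Type*} (s : Finset ι) (f : ι → ℚ) (t : ℚ) :
    ∑ i ∈ s, (t + f i)^2
      = t^2 * (∑ i ∈ s, (1:ℚ)) + 2*t*(∑ i ∈ s, f i) + ∑ i ∈ s, (f i)^2 := by
  simp only [Finset.mul_sum, ← Finset.sum_add_distrib]
  apply Finset.sum_congr rfl; intro i _; ring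

lemma sum_add_pow3 {ι : Type*} (s : Finset ι) (f : ι → ℚ) (t : ℚ) :
    ∑ i ∈ s, (t + f i)^3
      = t^3 * (∑ i ∈ s, (1:ℚ)) + 3*t^2*(∑ i ∈ s, f i)
        + 3*t*(∑ i ∈ s, (f i)^2) + ∑ i ∈ s, (f i)^3 := by
  simp only [Finset.mul_sum, ← Finset.sum_add_distrib]
  apply Finset.sum_congr rfl; intro i _; ring

lemma sum_add_pow4 {ι : Type*} (s : Finset ι) (f : ι → ℚ) (t : ℚ) :
    ∑ i ∈ s, (t + f i)^4
      = t^4 * (∑ i ∈ s, (1:ℚ)) + 4*t^3*(∑ i ∈ s, f i)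
        + 6*t^2*(∑ i ∈ s, (f i)^2) + 4*t*(∑ i ∈ s, (f i)^3) + ∑ i ∈ s, (f i)^4 := by
  simp only [Finset.mul_sum, ← Finset.sum_add_distrib]
  apply Finset.sum_congr rfl; intro i _; ring

end Moments

section MomentsMain

lemma outer1 (n : ℕ) (g S0 S1 : ℚ) :
    ∑ x ∈ range n, ((x:ℚ)*g * S0 + S1)
      = g*S0*((n:ℚ)*(n-1)/2) + S1*n := by
  induction n with
  | zero => simp
  | succ n ih => rw [sum_range_succ, ih]; push_cast; ring

lemma outer2 (n : ℕ) (g S0 S1 S2 : ℚ) :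
    ∑ x ∈ range n, (((x:ℚ)*g)^2 * S0 + 2*((x:ℚ)*g)*S1 + S2)
      = g^2*S0*((n:ℚ)*(n-1)*(2*n-1)/6) + 2*g*S1*((n:ℚ)*(n-1)/2) + S2*n := by
  induction n with
  | zero => simp
  | succ n ih => rw [sum_range_succ, ih]; push_cast; ring

lemma outer3 (n : ℕ) (g S0 S1 S2 S3 : ℚ) :
    ∑ x ∈ range n, (((x:ℚ)*g)^3 * S0 + 3*((x:ℚ)*g)^2*S1 + 3*((x:ℚ)*g)*S2 + S3)
      = g^3*S0*((n:ℚ)^2*(n-1)^2/4) + 3*g^2*S1*((n:ℚ)*(n-1)*(2*n-1)/6)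
        + 3*g*S2*((n:ℚ)*(n-1)/2) + S3*n := by
  induction n with
  | zero => simp
  | succ n ih => rw [sum_range_succ, ih]; push_cast; ring

lemma outer4 (n : ℕ) (g S0 S1 S2 S3 S4 : ℚ) :
    ∑ x ∈ range n, (((x:ℚ)*g)^4 * S0 + 4*((x:ℚ)*g)^3*S1 + 6*((x:ℚ)*g)^2*S2
        + 4*((x:ℚ)*g)*S3 + S4)
      = g^4*S0*((n:ℚ)*(n-1)*(2*n-1)*(3*n^2-3*n-1)/30) + 4*g^3*S1*((n:ℚ)^2*(n-1)^2/4)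
        + 6*g^2*S2*((n:ℚ)*(n-1)*(2*n-1)/6) + 4*g*S3*((n:ℚ)*(n-1)/2) + S4*n := by
  induction n with
  | zero => simp
  | succ n ih => rw [sum_range_succ, ih]; push_cast; ring

lemma momAll (k : ℕ) (a : ℕ → ℕ) (G : ℕ → ℚ) :
    (∑ c ∈ cbox k a, (1:ℚ)) = Qv k a ∧
    (∑ c ∈ cbox k a, Wq k G c) = Qv k a * Epow k a G 1 / 2 ∧
    (∑ c ∈ cbox k a, (Wq k G c)^2)
      = Qv k a * (Epow k a G 2/12 + (Epow k a G 1)^2/4) ∧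
    (∑ c ∈ cbox k a, (Wq k G c)^3)
      = Qv k a * (Epow k a G 1 * Epow k a G 2/8 + (Epow k a G 1)^3/8) ∧
    (∑ c ∈ cbox k a, (Wq k G c)^4)
      = Qv k a * (-(Epow k a G 4)/120 + (Epow k a G 2)^2/48
          + (Epow k a G 1)^2*(Epow k a G 2)/8 + (Epow k a G 1)^4/16) := by
  induction k generalizing a G with
  | zero =>
    have hbox : cbox 0 a = {fun j => 0} := by
      rw [Finset.eq_singleton_iff_unique_mem]
      constructor
      · rw [mem_cbox]; intro j; exact j.elim0
      · intro c _; funext j; exact j.elim0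
    simp [hbox, Wq, Epow, Qv]
  | succ k ih =>
    obtain ⟨ih0, ih1, ih2, ih3, ih4⟩ := ih (fun t => a (t+1)) (fun t => G (t+1))
    set a' : ℕ → ℕ := fun t => a (t+1)
    set G' : ℕ → ℚ := fun t => G (t+1)
    have hsplit0 : (∑ c ∈ cbox (k+1) a, (1:ℚ)) = (a 0 : ℚ) * Qv k a' := by
      rw [cbox_split (k := k) (a := a) (F := fun _ => (1:ℚ))]
      simp [ih0, Finset.sum_const, card_range]
      left; rw [← ih0]; simp [a']
    have key0 : (∑ c ∈ cbox (k+1) a, (1:ℚ)) = Qv (k+1) a := by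
      rw [hsplit0, Qv_succ]
    refine ⟨key0, ?_, ?_, ?_, ?_⟩
    · calc ∑ c ∈ cbox (k+1) a, Wq (k+1) G c
          = ∑ x ∈ range (a 0), ∑ c ∈ cbox k a', ((x:ℚ)*G 0 + Wq k G' c) := by
            rw [cbox_split (F := fun c => Wq (k+1) G c)]
            exact Finset.sum_congr rfl fun x _ => Finset.sum_congr rfl fun c _ => by
              rw [Wq_cons]
        _ = ∑ x ∈ range (a 0), ((x:ℚ)*G 0 * (∑ c ∈ cbox k a', (1:ℚ))
              + ∑ c ∈ cbox k a', Wq k G' c) :=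
            Finset.sum_congr rfl fun x _ => sum_add_pow1 _ _ _
        _ = _ := by
            rw [outer1, ih0, ih1, Qv_succ, Epow_succ]
            ring
    · calc ∑ c ∈ cbox (k+1) a, (Wq (k+1) G c)^2
          = ∑ x ∈ range (a 0), ∑ c ∈ cbox k a', ((x:ℚ)*G 0 + Wq k G' c)^2 := by
            rw [cbox_split (F := fun c => (Wq (k+1) G c)^2)]
            exact Finset.sum_congr rfl fun x _ => Finset.sum_congr rfl fun c _ => by
              rw [Wq_cons]
        _ = ∑ x ∈ range (a 0), (((x:ℚ)*G 0)^2 * (∑ c ∈ cbox k a', (1:ℚ))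
              + 2*((x:ℚ)*G 0)*(∑ c ∈ cbox k a', Wq k G' c)
              + ∑ c ∈ cbox k a', (Wq k G' c)^2) :=
            Finset.sum_congr rfl fun x _ => sum_add_pow2 _ _ _
        _ = _ := by
            rw [outer2, ih0, ih1, ih2, Qv_succ, Epow_succ, Epow_succ]
            ring
    · calc ∑ c ∈ cbox (k+1) a, (Wq (k+1) G c)^3
          = ∑ x ∈ range (a 0), ∑ c ∈ cbox k a', ((x:ℚ)*G 0 + Wq k G' c)^3 := by
            rw [cbox_split (F := fun c => (Wq (k+1) G c)^3)]
            exact Finset.sum_congr rfl fun x _ => Finset.sum_congr rfl fun c _ => by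
              rw [Wq_cons]
        _ = ∑ x ∈ range (a 0), (((x:ℚ)*G 0)^3 * (∑ c ∈ cbox k a', (1:ℚ))
              + 3*((x:ℚ)*G 0)^2*(∑ c ∈ cbox k a', Wq k G' c)
              + 3*((x:ℚ)*G 0)*(∑ c ∈ cbox k a', (Wq k G' c)^2)
              + ∑ c ∈ cbox k a', (Wq k G' c)^3) :=
            Finset.sum_congr rfl fun x _ => sum_add_pow3 _ _ _
        _ = _ := by
            rw [outer3, ih0, ih1, ih2, ih3, Qv_succ, Epow_succ, Epow_succ]
            ring
    · calc ∑ c ∈ cbox (k+1) a, (Wq (k+1) G c)^4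
          = ∑ x ∈ range (a 0), ∑ c ∈ cbox k a', ((x:ℚ)*G 0 + Wq k G' c)^4 := by
            rw [cbox_split (F := fun c => (Wq (k+1) G c)^4)]
            exact Finset.sum_congr rfl fun x _ => Finset.sum_congr rfl fun c _ => by
              rw [Wq_cons]
        _ = ∑ x ∈ range (a 0), (((x:ℚ)*G 0)^4 * (∑ c ∈ cbox k a', (1:ℚ))
              + 4*((x:ℚ)*G 0)^3*(∑ c ∈ cbox k a', Wq k G' c)
              + 6*((x:ℚ)*G 0)^2*(∑ c ∈ cbox k a', (Wq k G' c)^2)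
              + 4*((x:ℚ)*G 0)*(∑ c ∈ cbox k a', (Wq k G' c)^3)
              + ∑ c ∈ cbox k a', (Wq k G' c)^4) :=
            Finset.sum_congr rfl fun x _ => sum_add_pow4 _ _ _
        _ = _ := by
            rw [outer4, ih0, ih1, ih2, ih3, ih4, Qv_succ, Epow_succ, Epow_succ, Epow_succ]
            ring

end MomentsMain

section Residue

lemma residue_sum (k : ℕ) (A B : ℕ → ℕ)
    (hA : ∀ i, i < k → 0 < A i) (hB : ∀ i, i < k → 0 < B i)
    (hsuit : ∀ i j, j ≤ i → i < k → Nat.Coprime (A i) (B j))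
    (ψ : ℕ → ℚ) :
    ∑ c ∈ cbox k A, ψ (wgt k A B c % (∏ j ∈ range k, A j))
      = ∑ r ∈ range (∏ j ∈ range k, A j), ψ r := by
  obtain ⟨hinj, -⟩ := compound_key k A B hA hB hsuit
  set Q : ℕ := ∏ j ∈ range k, A j with hQdef
  have hQpos : 0 < Q := Finset.prod_pos (fun j hj => hA j (mem_range.1 hj))
  have hcard : (range Q).card ≤ (cbox k A).card := by
    rw [card_cbox, card_range]
  apply Finset.sum_bij (i := fun c (_ : c ∈ cbox k A) => wgt k A B c % Q)
  · intro c hc; exact mem_range.2 (Nat.mod_lt _ hQpos)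
  · intro c hc d hd h; exact hinj c hc d hd h
  · intro r hr
    obtain ⟨c, hc, hceq⟩ := Finset.surj_on_of_inj_on_of_card_le
      (f := fun c (_ : c ∈ cbox k A) => wgt k A B c % Q)
      (fun c hc => mem_range.2 (Nat.mod_lt _ hQpos))
      (fun c d hc hd h => hinj c hc d hd h) hcard r hr
    exact ⟨c, hc, hceq.symm⟩
  · intro c hc; rfl

lemma inner_cube (Qn : ℕ) (hQ : 0 < Qn) (w : ℕ) :
    ∑ z ∈ Icc 1 (w / Qn), ((w - z*Qn : ℕ) : ℚ)^3
      = ((w:ℚ)^4 - ((w % Qn : ℕ):ℚ)^4)/(4*(Qn:ℚ))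
        - ((w:ℚ)^3 - ((w % Qn : ℕ):ℚ)^3)/2
        + (Qn:ℚ)*((w:ℚ)^2 - ((w % Qn : ℕ):ℚ)^2)/4 := by
  set f : ℕ := w / Qn with hfdef
  set r : ℕ := w % Qn with hrdef
  have hw : r + Qn * f = w := Nat.mod_add_div w Qn
  have hwq : (w:ℚ) = (r:ℚ) + (f:ℚ)*(Qn:ℚ) := by
    push_cast [← hw]; ring
  have hQne : (Qn:ℚ) ≠ 0 := by positivity
  have step1 : ∑ z ∈ Icc 1 f, ((w - z*Qn : ℕ) : ℚ)^3
      = ∑ z ∈ Icc 1 f, ((w:ℚ) - (z:ℚ)*(Qn:ℚ))^3 := by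
    apply Finset.sum_congr rfl
    intro z hz
    rw [mem_Icc] at hz
    have hzw : z * Qn ≤ w := by
      have hfw : f * Qn ≤ w := by rw [mul_comm]; omega
      calc z * Qn ≤ f * Qn := Nat.mul_le_mul_right _ hz.2
      _ ≤ w := hfw
    rw [Nat.cast_sub hzw]
    push_cast
    ring
  rw [step1, sum_Icc_reflect f (fun z => ((w:ℚ) - (z:ℚ)*(Qn:ℚ))^3)]
  have step3 : ∑ i ∈ range f, ((w:ℚ) - ((f - i : ℕ):ℚ)*(Qn:ℚ))^3
      = ∑ i ∈ range f, ((r:ℚ) + (i:ℚ)*(Qn:ℚ))^3 := by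
    apply Finset.sum_congr rfl
    intro i hi
    rw [mem_range] at hi
    rw [Nat.cast_sub (le_of_lt hi), hwq]
    ring
  rw [step3, sum_cube (Qn:ℚ) hQne f (r:ℚ), ← hwq]

end Residue

section Core

lemma core (k : ℕ) (A B : ℕ → ℕ)
    (hA : ∀ i, i < k → 0 < A i) (hB : ∀ i, i < k → 0 < B i)
    (hsuit : ∀ i j, j ≤ i → i < k → Nat.Coprime (A i) (B j))
    (NR : Finset ℕ)
    (hNR : ∀ n : ℕ, n ∈ NR ↔
      ¬ ∃ co : Fin (k + 1) → ℕ, n = ∑ i : Fin (k + 1), co i * compoundSeq k A B (i : ℕ)) :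
    ((NR.card : ℚ) = (Epow k A (fun j => (compoundSeq k A B (j+1) : ℚ)) 1
        - Qv k A + 1)/2) ∧
    (∑ n ∈ NR, (n:ℚ)^3 =
      ((Qv k A)*(-(Epow k A (fun j => (compoundSeq k A B (j+1) : ℚ)) 4)/120
          + (Epow k A (fun j => (compoundSeq k A B (j+1) : ℚ)) 2)^2/48
          + (Epow k A (fun j => (compoundSeq k A B (j+1) : ℚ)) 1)^2
            *(Epow k A (fun j => (compoundSeq k A B (j+1) : ℚ)) 2)/8
          + (Epow k A (fun j => (compoundSeq k A B (j+1) : ℚ)) 1)^4/16)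
        - (Qv k A)*((Qv k A)-1)*(2*(Qv k A)-1)*(3*(Qv k A)^2-3*(Qv k A)-1)/30)/(4*(Qv k A))
      - ((Qv k A)*((Epow k A (fun j => (compoundSeq k A B (j+1) : ℚ)) 1)
            *(Epow k A (fun j => (compoundSeq k A B (j+1) : ℚ)) 2)/8
          + (Epow k A (fun j => (compoundSeq k A B (j+1) : ℚ)) 1)^3/8)
        - (Qv k A)^2*((Qv k A)-1)^2/4)/2
      + (Qv k A)*((Qv k A)*((Epow k A (fun j => (compoundSeq k A B (j+1) : ℚ)) 2)/12
          + (Epow k A (fun j => (compoundSeq k A B (j+1) : ℚ)) 1)^2/4)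
        - (Qv k A)*((Qv k A)-1)*(2*(Qv k A)-1)/6)/4) := by
  set Q : ℕ := ∏ j ∈ range k, A j with hQdef
  have hQpos : 0 < Q := Finset.prod_pos (fun j hj => hA j (mem_range.1 hj))
  set Gq : ℕ → ℚ := fun j => (compoundSeq k A B (j+1) : ℚ) with hGqdef
  have hQq : Qv k A = (Q:ℚ) := by
    unfold Qv; rw [hQdef]; push_cast; rfl
  have hQne : (Q:ℚ) ≠ 0 := by positivity
  have hW : ∀ c : Fin k → ℕ, (wgt k A B c : ℚ) = Wq k Gq c := by
    intro c
    unfold wgt Wq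
    push_cast
    rfl
  obtain ⟨m0, m1, m2, m3, m4⟩ := momAll k A Gq
  have hMW : ∀ p : ℕ, ∑ c ∈ cbox k A, (wgt k A B c : ℚ)^p
      = ∑ c ∈ cbox k A, (Wq k Gq c)^p := by
    intro p; exact Finset.sum_congr rfl fun c _ => by rw [hW c]
  have hmd : ∀ c : Fin k → ℕ,
      ((wgt k A B c % Q : ℕ):ℚ) + (Q:ℚ)*((wgt k A B c / Q : ℕ):ℚ)
        = (wgt k A B c : ℚ) := by
    intro c; exact_mod_cast Nat.mod_add_div (wgt k A B c) Q
  constructor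
  · have h1 : (NR.card : ℚ) = ∑ n ∈ NR, (1:ℚ) := by simp
    rw [gap_sum k A B hA hB hsuit NR hNR (fun _ => (1:ℚ))] at h1
    have h2 : ∀ c ∈ cbox k A, ∑ z ∈ Icc 1 (wgt k A B c / Q), (1:ℚ)
        = (1/(Q:ℚ)) * (wgt k A B c : ℚ)
          + (-(1/(Q:ℚ))) * ((wgt k A B c % Q : ℕ):ℚ) := by
      intro c _
      rw [Finset.sum_const, Nat.card_Icc]
      simp only [nsmul_eq_mul, mul_one]
      have := hmd c
      field_simp
      push_cast
      linarith [hmd c]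
    rw [Finset.sum_congr rfl h2, Finset.sum_add_distrib, ← Finset.mul_sum,
      ← Finset.mul_sum] at h1
    have hMW1 : ∑ c ∈ cbox k A, (wgt k A B c : ℚ) = ∑ c ∈ cbox k A, Wq k Gq c :=
      Finset.sum_congr rfl fun c _ => hW c
    rw [hMW1, m1] at h1
    rw [residue_sum k A B hA hB hsuit (fun r => (r:ℚ))] at h1
    rw [← hQdef] at h1
    rw [faul1 Q] at h1
    rw [h1, hQq]
    field_simp
    ring
  · rw [gap_sum k A B hA hB hsuit NR hNR (fun n => (n:ℚ)^3)]
    have h2 : ∀ c ∈ cbox k A,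
        ∑ z ∈ Icc 1 (wgt k A B c / Q), ((wgt k A B c - z*Q : ℕ) : ℚ)^3
          = (1/(4*(Q:ℚ))) * (wgt k A B c : ℚ)^4
            + (-(1/(4*(Q:ℚ)))) * ((wgt k A B c % Q : ℕ):ℚ)^4
            + (-(1/2)) * (wgt k A B c : ℚ)^3
            + (1/2) * ((wgt k A B c % Q : ℕ):ℚ)^3
            + ((Q:ℚ)/4) * (wgt k A B c : ℚ)^2
            + (-((Q:ℚ)/4)) * ((wgt k A B c % Q : ℕ):ℚ)^2 := by
      intro c _
      rw [inner_cube Q hQpos (wgt k A B c)]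
      ring
    rw [Finset.sum_congr rfl h2]
    rw [Finset.sum_add_distrib, Finset.sum_add_distrib, Finset.sum_add_distrib,
      Finset.sum_add_distrib, Finset.sum_add_distrib]
    rw [← Finset.mul_sum, ← Finset.mul_sum, ← Finset.mul_sum, ← Finset.mul_sum,
      ← Finset.mul_sum, ← Finset.mul_sum]
    rw [hMW 4, hMW 3, hMW 2, m2, m3, m4]
    rw [residue_sum k A B hA hB hsuit (fun r => (r:ℚ)^4),
      residue_sum k A B hA hB hsuit (fun r => (r:ℚ)^3),
      residue_sum k A B hA hB hsuit (fun r => (r:ℚ)^2)]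
    rw [← hQdef, faul4 Q, faul3 Q, faul2 Q, hQq]
    field_simp
    ring

end Core

/-- `S₃(A,B) = (S₀²−S₀)²/4 + (S₀(A²,B²)/4)·S₀·(S₀−1)
  + (S₀(A²,B²)/48)·(S₀(A²,B²)+2) − S₀(A⁴,B⁴)/240`. -/
theorem sylvester_sum_three (k : ℕ) (A B : ℕ → ℕ)
    (hA : ∀ i, i < k → 0 < A i) (hB : ∀ i, i < k → 0 < B i)
    (hsuit : ∀ i j, j ≤ i → i < k → Nat.Coprime (A i) (B j))
    (NR NR2 NR4 : Finset ℕ)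
    (hNR : ∀ n : ℕ, n ∈ NR ↔
      ¬ ∃ c : Fin (k + 1) → ℕ, n = ∑ i : Fin (k + 1), c i * compoundSeq k A B (i : ℕ))
    (hNR2 : ∀ n : ℕ, n ∈ NR2 ↔
      ¬ ∃ c : Fin (k + 1) → ℕ,
        n = ∑ i : Fin (k + 1), c i * compoundSeq k (fun t => (A t) ^ 2) (fun t => (B t) ^ 2) (i : ℕ))
    (hNR4 : ∀ n : ℕ, n ∈ NR4 ↔
      ¬ ∃ c : Fin (k + 1) → ℕ,
        n = ∑ i : Fin (k + 1), c i * compoundSeq k (fun t => (A t) ^ 4) (fun t => (B t) ^ 4) (i : ℕ)) :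
    (∑ n ∈ NR, (n : ℚ) ^ 3) =
      ((NR.card : ℚ) ^ 2 - (NR.card : ℚ)) ^ 2 / 4 +
        (NR2.card : ℚ) / 4 * (NR.card : ℚ) * ((NR.card : ℚ) - 1) +
        (NR2.card : ℚ) / 48 * ((NR2.card : ℚ) + 2) - (NR4.card : ℚ) / 240 := by
  obtain ⟨hcard1, hS3⟩ := core k A B hA hB hsuit NR hNR
  have hA2 : ∀ i, i < k → 0 < (fun t => A t ^ 2) i := fun i hi => pow_pos (hA i hi) 2
  have hB2 : ∀ i, i < k → 0 < (fun t => B t ^ 2) i := fun i hi => pow_pos (hB i hi) 2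
  have hsuit2 : ∀ i j, j ≤ i → i < k →
      Nat.Coprime ((fun t => A t ^ 2) i) ((fun t => B t ^ 2) j) :=
    fun i j hij hi => Nat.Coprime.pow _ _ (hsuit i j hij hi)
  have hA4 : ∀ i, i < k → 0 < (fun t => A t ^ 4) i := fun i hi => pow_pos (hA i hi) 4
  have hB4 : ∀ i, i < k → 0 < (fun t => B t ^ 4) i := fun i hi => pow_pos (hB i hi) 4
  have hsuit4 : ∀ i j, j ≤ i → i < k →
      Nat.Coprime ((fun t => A t ^ 4) i) ((fun t => B t ^ 4) j) :=
    fun i j hij hi => Nat.Coprime.pow _ _ (hsuit i j hij hi)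
  obtain ⟨hcard2, -⟩ := core k (fun t => A t ^ 2) (fun t => B t ^ 2) hA2 hB2 hsuit2 NR2 hNR2
  obtain ⟨hcard4, -⟩ := core k (fun t => A t ^ 4) (fun t => B t ^ 4) hA4 hB4 hsuit4 NR4 hNR4
  have hE2 : Epow k (fun t => A t ^ 2)
      (fun j => (compoundSeq k (fun t => A t ^ 2) (fun t => B t ^ 2) (j+1) : ℚ)) 1
      = Epow k A (fun j => (compoundSeq k A B (j+1) : ℚ)) 2 := by
    unfold Epow
    apply Finset.sum_congr rfl
    intro j _
    simp only [compoundSeq_pow]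
    push_cast
    ring
  have hE4 : Epow k (fun t => A t ^ 4)
      (fun j => (compoundSeq k (fun t => A t ^ 4) (fun t => B t ^ 4) (j+1) : ℚ)) 1
      = Epow k A (fun j => (compoundSeq k A B (j+1) : ℚ)) 4 := by
    unfold Epow
    apply Finset.sum_congr rfl
    intro j _
    simp only [compoundSeq_pow]
    push_cast
    ring
  have hQ2 : Qv k (fun t => A t ^ 2) = (Qv k A)^2 := by
    unfold Qv
    rw [← Finset.prod_pow]
    apply Finset.prod_congr rfl
    intro j _
    push_cast
    ring
  have hQ4 : Qv k (fun t => A t ^ 4) = (Qv k A)^4 := by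
    unfold Qv
    rw [← Finset.prod_pow]
    apply Finset.prod_congr rfl
    intro j _
    push_cast
    ring
  rw [hE2, hQ2] at hcard2
  rw [hE4, hQ4] at hcard4
  have hqpos : 0 < Qv k A := by
    unfold Qv
    apply Finset.prod_pos
    intro j hj
    exact_mod_cast hA j (mem_range.1 hj)
  have hqne : Qv k A ≠ 0 := ne_of_gt hqpos
  rw [hS3, hcard1, hcard2, hcard4]
  field_simp
  ring
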